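/- For disjoint permutations π of length m and σ of length n, the sum of q^{maj(τ)} over all shuffles τ of π and σ equals q^{maj(π)+maj(σ)} times the q-binomial coefficient [m+n choose m]_q. -/

import Mathlib

/-- A permutation: a list of distinct positive integers. -/
def IsPerm (π : List ℕ) : Prop := π.Nodup ∧ ∀ x ∈ π, 0 < x

/-- The descent set (1-indexed): `i ∈ [n-1]` with `π_i > π_{i+1}`. -/
def desSet (π : List ℕ) : Finset ℕ :=
  (Finset.Icc 1 (π.length - 1)).filter (fun i => π.getD i 0 < π.getD (i-1) 0)

/-- Number of descents. -/
def des (π : List ℕ) : ℕ := (desSet π).card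

/-- Major index: sum of descent positions. -/
def maj (π : List ℕ) : ℕ := ∑ i ∈ desSet π, i

/-- Number of peaks: `2 ≤ i ≤ n-1` with `π_{i-1} < π_i > π_{i+1}` (1-indexed). -/
def pk (π : List ℕ) : ℕ :=
  ((Finset.Icc 2 (π.length - 1)).filter (fun i =>
    π.getD (i-2) 0 < π.getD (i-1) 0 ∧ π.getD i 0 < π.getD (i-1) 0)).card

/-- Number of valleys: `2 ≤ i ≤ n-1` with `π_{i-1} > π_i < π_{i+1}` (1-indexed). -/
def valley (π : List ℕ) : ℕ :=
  ((Finset.Icc 2 (π.length - 1)).filter (fun i =>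
    π.getD (i-1) 0 < π.getD (i-2) 0 ∧ π.getD (i-1) 0 < π.getD i 0)).card

/-- The left peak set: `i ∈ [n-1]` with `π_{i-1} < π_i > π_{i+1}`, where `π_0 := 0`. -/
def lpkSet (π : List ℕ) : Finset ℕ :=
  (Finset.Icc 1 (π.length - 1)).filter (fun i =>
    (0 :: π).getD (i-1) 0 < (0 :: π).getD i 0 ∧ (0 :: π).getD (i+1) 0 < (0 :: π).getD i 0)

/-- Number of left peaks. -/
def lpk (π : List ℕ) : ℕ := (lpkSet π).card

/-- Number of biruns (maximal monotone consecutive subsequences):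
one more than the number of direction changes, for lists with at least 2 letters. -/
def br (π : List ℕ) : ℕ :=
  if π.length ≤ 1 then π.length
  else 1 + ((Finset.Icc 2 (π.length - 1)).filter (fun i =>
      (π.getD (i-2) 0 < π.getD (i-1) 0 ↔ π.getD i 0 < π.getD (i-1) 0))).card

/-- Number of up-down runs: the biruns, together with `π_1` when `π_1 > π_2`. -/
def udr (π : List ℕ) : ℕ :=
  br π + (if 2 ≤ π.length ∧ π.getD 1 0 < π.getD 0 0 then 1 else 0)

/-- The maximal increasing runs of a list. -/
def incRuns : List ℕ → List (List ℕ)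
  | [] => []
  | [a] => [[a]]
  | a :: b :: l =>
    match incRuns (b :: l) with
    | [] => [[a]]
    | r :: rs => if a < b then (a :: r) :: rs else [a] :: r :: rs

/-- Number of long runs (maximal increasing runs of length at least 2). -/
def lr (π : List ℕ) : ℕ := ((incRuns π).filter (fun r => 2 ≤ r.length)).length

/-- `1` if the initial run is long, `0` otherwise. -/
def lir (π : List ℕ) : ℕ := if 2 ≤ ((incRuns π).headD []).length then 1 else 0

/-- `1` if the final run is long, `0` otherwise. -/
def lfr (π : List ℕ) : ℕ := if 2 ≤ ((incRuns π).getLastD []).length then 1 else 0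

/-- The descent composition: the lengths of the maximal increasing runs. -/
def descComp (π : List ℕ) : List ℕ := (incRuns π).map List.length

/-- `τ` is a shuffle of `π` and `σ`: a permutation of length `|π| + |σ|`
containing both `π` and `σ` as subsequences. -/
def IsShuffle (π σ τ : List ℕ) : Prop :=
  τ.length = π.length + σ.length ∧ IsPerm τ ∧ π.Sublist τ ∧ σ.Sublist τ

open Classical in
/-- The finite set of shuffles of `π` and `σ`. -/
noncomputable def shuffles (π σ : List ℕ) : Finset (List ℕ) :=
  (π ++ σ).permutations.toFinset.filter (fun τ => IsShuffle π σ τ)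

/-- `J` is a refinement of `M` in the refinement order on weak compositions
(where `M` covers `L` when `M` is obtained from `L` by replacing two consecutive
parts by their sum): `M` is obtained by summing consecutive nonempty blocks of `J`. -/
def Refines (J M : List ℕ) : Prop :=
  ∃ P : List (List ℕ), P.flatten = J ∧ P.map List.sum = M ∧ ∀ b ∈ P, b ≠ []

/-- Successive differences, starting from `prev`. -/
def diffList : ℕ → List ℕ → List ℕ
  | _, [] => []
  | prev, a :: rest => (a - prev) :: diffList a rest

/-- `Comp(A)`: the composition of `N` determined by `A = {a₁ < ⋯ < a_j} ⊆ [N-1]`,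
namely `(a₁, a₂ - a₁, …, N - a_j)`. -/
def compOfSet (N : ℕ) (A : Finset ℕ) : List ℕ :=
  diffList 0 ((A.sort (· ≤ ·)) ++ [N])

/-- The `q`-factorial `[n]_q! = (1)(1+q)⋯(1+q+⋯+q^{n-1})`. -/
noncomputable def qFact (q : RatFunc ℚ) (n : ℕ) : RatFunc ℚ :=
  ∏ j ∈ Finset.range n, ∑ i ∈ Finset.range (j+1), q ^ i

/-- The `q`-binomial coefficient `[n choose k]_q`. -/
noncomputable def qBinom (q : RatFunc ℚ) (n k : ℕ) : RatFunc ℚ :=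
  qFact q n / (qFact q k * qFact q (n - k))

section StanleyAux

open List

/-- Strict key order: sort by label descending, then letter ascending. -/
def KR (p q : ℕ × ℕ) : Prop := q.2 < p.2 ∨ (q.2 = p.2 ∧ p.1 < q.1)

/-- Non-strict key order. -/
def KLE (p q : ℕ × ℕ) : Prop := q.2 < p.2 ∨ (q.2 = p.2 ∧ p.1 ≤ q.1)

instance : DecidableRel KR := fun p q => by unfold KR; infer_instance
instance : DecidableRel KLE := fun p q => by unfold KLE; infer_instance

instance : IsTrans (ℕ × ℕ) KR := ⟨by rintro a b c (h | ⟨h1, h2⟩) (h' | ⟨h1', h2'⟩) <;> unfold KR <;> omega⟩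
instance : IsTrans (ℕ × ℕ) KLE := ⟨by rintro a b c (h | ⟨h1, h2⟩) (h' | ⟨h1', h2'⟩) <;> unfold KLE <;> omega⟩
instance : IsTotal (ℕ × ℕ) KLE := ⟨by intro a b; unfold KLE; omega⟩
instance : IsAntisymm (ℕ × ℕ) KR := ⟨by rintro ⟨a1,a2⟩ ⟨b1,b2⟩ (h | ⟨h1, h2⟩) (h' | ⟨h1', h2'⟩) <;> simp_all <;> omega⟩

lemma KR.kle {p q : ℕ × ℕ} (h : KR p q) : KLE p q := by unfold KR KLE at *; omega

/-- `g` is a compatible labelling of `w`. -/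
def Compat (w g : List ℕ) : Prop := g.length = w.length ∧ (w.zip g).Pairwise KR

instance : ∀ w g, Decidable (Compat w g) := fun w g => by unfold Compat; infer_instance

/-- lists of length `N` with entries `≤ M`. -/
def tuples : ℕ → ℕ → Finset (List ℕ)
  | 0, _ => {[]}
  | (N+1), M => ((Finset.range (M+1)) ×ˢ tuples N M).image (fun p => p.1 :: p.2)

lemma mem_tuples {N M : ℕ} {l : List ℕ} :
    l ∈ tuples N M ↔ l.length = N ∧ ∀ x ∈ l, x ≤ M := by
  induction N generalizing l with
  | zero => cases l <;> simp [tuples]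
  | succ N ih =>
    cases l with
    | nil => simp [tuples]
    | cons a l =>
      simp only [tuples, Finset.mem_image, Finset.mem_product, Finset.mem_range, Prod.exists]
      constructor
      · rintro ⟨x, y, ⟨hx, hy⟩, h⟩
        obtain ⟨rfl, rfl⟩ : x = a ∧ y = l := by simpa using h
        rcases ih.1 hy with ⟨h1, h2⟩
        refine ⟨by simp [h1], ?_⟩
        intro z hz; rcases List.mem_cons.1 hz with rfl | hz; · omega
        exact h2 z hz
      · rintro ⟨h1, h2⟩
        exact ⟨a, l, ⟨by have := h2 a (by simp); omega,
          ih.2 ⟨by simpa using h1, fun z hz => h2 z (by simp [hz])⟩⟩, rfl⟩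

/-- compatible labellings of `w` with sum `M`. -/
def compSet (w : List ℕ) (M : ℕ) : Finset (List ℕ) :=
  (tuples w.length M).filter (fun g => Compat w g ∧ g.sum = M)

lemma mem_compSet {w : List ℕ} {M g} : g ∈ compSet w M ↔ Compat w g ∧ g.sum = M := by
  unfold compSet
  simp only [Finset.mem_filter, mem_tuples]
  refine ⟨fun h => h.2, fun h => ⟨⟨h.1.1, fun x hx => ?_⟩, h⟩⟩
  have := List.single_le_sum (by intro y _; exact Nat.zero_le y) x hx
  omega

/-- weakly decreasing lists of length `N` with sum `M`. -/
def decSet (N M : ℕ) : Finset (List ℕ) :=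
  (tuples N M).filter (fun h => h.Pairwise (· ≥ ·) ∧ h.sum = M)

lemma mem_decSet {N M : ℕ} {h : List ℕ} :
    h ∈ decSet N M ↔ h.length = N ∧ h.Pairwise (· ≥ ·) ∧ h.sum = M := by
  unfold decSet
  simp only [Finset.mem_filter, mem_tuples]
  constructor
  · rintro ⟨⟨h1, _⟩, h2⟩; exact ⟨h1, h2⟩
  · rintro ⟨h1, h2, h3⟩
    refine ⟨⟨h1, fun x hx => ?_⟩, h2, h3⟩
    have := List.single_le_sum (by intro y _; exact Nat.zero_le y) x hx
    omega

end StanleyAux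
section StanleyAux2

open List Finset

lemma pairwise_iff_adj {α : Type*} {R : α → α → Prop} [IsTrans α R] {l : List α} :
    l.Pairwise R ↔ ∀ i, (h : i + 1 < l.length) → R (l[i]'(by omega)) (l[i+1]'h) := by
  rw [← List.isChain_iff_pairwise, List.isChain_iff_getElem]

lemma mem_desSet {w : List ℕ} {j : ℕ} (h : j + 1 < w.length) :
    (j + 1) ∈ desSet w ↔ w[j+1] < w[j]'(by omega) := by
  unfold desSet
  rw [Finset.mem_filter, Finset.mem_Icc,
    List.getD_eq_getElem w 0 (by omega : j + 1 < w.length)]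
  have : j + 1 - 1 = j := by omega
  rw [this, List.getD_eq_getElem w 0 (by omega : j < w.length)]
  constructor
  · tauto
  · intro hlt; exact ⟨⟨by omega, by omega⟩, hlt⟩

lemma compat_iff_nice {w g : List ℕ} (hw : w.Nodup) :
    Compat w g ↔ g.length = w.length ∧ ∀ j, j + 1 < w.length →
      g.getD (j+1) 0 + (if (j+1) ∈ desSet w then 1 else 0) ≤ g.getD j 0 := by
  unfold Compat
  refine and_congr_right fun hlen => ?_
  have hzl : (w.zip g).length = w.length := by simp [hlen]
  rw [pairwise_iff_adj]
  apply forall_congr'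
  intro j
  constructor
  · intro hKR hj
    have hj' : j + 1 < (w.zip g).length := by omega
    have hK := hKR hj'
    rw [List.getElem_zip, List.getElem_zip] at hK
    rw [List.getD_eq_getElem g 0 (by omega), List.getD_eq_getElem g 0 (by omega)]
    have hdes := mem_desSet hj
    rcases hK with h1 | ⟨h1, h2⟩
    · simp only at h1; split_ifs <;> omega
    · simp only at h1 h2
      have hnd : ¬ ((j+1) ∈ desSet w) := fun hm => by have := hdes.mp hm; omega
      rw [if_neg hnd]; omega
  · intro hnice hj
    have hjw : j + 1 < w.length := by omega
    have hN := hnice hjw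
    rw [List.getD_eq_getElem g 0 (by omega), List.getD_eq_getElem g 0 (by omega)] at hN
    rw [List.getElem_zip, List.getElem_zip]
    have hne : w[j]'(by omega) ≠ w[j+1]'hjw := by
      intro hEq
      have := (List.Nodup.getElem_inj_iff hw).mp hEq
      omega
    have hdes := mem_desSet hjw
    unfold KR
    simp only
    split_ifs at hN with hmem
    · have hlt := hdes.mp hmem
      omega
    · have hge : ¬ (w[j+1]'hjw < w[j]'(by omega)) := fun hl => hmem (hdes.mpr hl)
      have hlt : w[j]'(by omega) < w[j+1]'hjw := by omega
      omega

/-- staircase: number of descents strictly to the right of position `j` (1-indexed descents). -/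
def dst (w : List ℕ) (j : ℕ) : ℕ := ((desSet w).filter (fun i => j < i)).card

lemma mem_desSet_bounds {w : List ℕ} {i : ℕ} (h : i ∈ desSet w) :
    1 ≤ i ∧ i ≤ w.length - 1 := by
  unfold desSet at h; rw [Finset.mem_filter, Finset.mem_Icc] at h; exact h.1

lemma dst_eq_zero {w : List ℕ} {j : ℕ} (h : w.length - 1 ≤ j) : dst w j = 0 := by
  unfold dst
  rw [Finset.card_eq_zero, Finset.filter_eq_empty_iff]
  intro i hi
  have := mem_desSet_bounds hi
  omega

lemma dst_succ (w : List ℕ) (j : ℕ) :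
    dst w j = dst w (j+1) + (if (j+1) ∈ desSet w then 1 else 0) := by
  unfold dst
  have h1 : (desSet w).filter (fun i => j < i)
      = ((desSet w).filter (fun i => j + 1 < i)) ∪ ((desSet w).filter (fun i => i = j + 1)) := by
    rw [← Finset.filter_or]
    apply Finset.filter_congr
    intro x _; constructor <;> (intro; omega)
  rw [h1, Finset.card_union_of_disjoint, Finset.filter_eq']
  · split_ifs <;> simp
  · rw [Finset.disjoint_filter]
    intro x _ hx; omega

lemma sum_dst (w : List ℕ) : ∑ j ∈ Finset.range w.length, dst w j = maj w := by
  unfold dst maj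
  have : ∀ j ∈ Finset.range w.length, ((desSet w).filter (fun i => j < i)).card
      = ∑ i ∈ desSet w, if j < i then 1 else 0 := by
    intro j _; rw [Finset.card_filter]
  rw [Finset.sum_congr rfl this, Finset.sum_comm]
  apply Finset.sum_congr rfl
  intro i hi
  have hb := mem_desSet_bounds hi
  have : ∑ j ∈ Finset.range w.length, (if j < i then 1 else 0)
      = (Finset.filter (fun j => j < i) (Finset.range w.length)).card := by
    rw [Finset.card_filter]
  rw [this]
  have : Finset.filter (fun j => j < i) (Finset.range w.length) = Finset.range i := by
    ext x; simp only [Finset.mem_filter, Finset.mem_range]; omega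
  rw [this, Finset.card_range]

lemma nice_ge_dst {w g : List ℕ}
    (hnice : ∀ j, j + 1 < w.length → g.getD (j+1) 0 + (if (j+1) ∈ desSet w then 1 else 0) ≤ g.getD j 0) :
    ∀ j, j < w.length → dst w j ≤ g.getD j 0 := by
  have key : ∀ k j, j < w.length → w.length - 1 - j ≤ k → dst w j ≤ g.getD j 0 := by
    intro k
    induction k with
    | zero => intro j hj hk; rw [dst_eq_zero (by omega)]; omega
    | succ k ih =>
      intro j hj hk
      by_cases hle : w.length - 1 - j ≤ k
      · exact ih j hj hle
      · have hj1 : j + 1 < w.length := by omega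
        have h1 := ih (j+1) (by omega) (by omega)
        have h2 := hnice j hj1
        rw [dst_succ w j]
        split_ifs at h2 ⊢ <;> omega
  intro j hj; exact key (w.length - 1 - j) j hj le_rfl

lemma getD_map_range {f : ℕ → ℕ} {j N : ℕ} (h : j < N) :
    ((List.range N).map f).getD j 0 = f j := by
  rw [List.getD_eq_getElem _ 0 (by simpa using h)]
  simp

lemma sum_map_range {f : ℕ → ℕ} {N : ℕ} :
    ((List.range N).map f).sum = ∑ j ∈ Finset.range N, f j := by
  induction N with
  | zero => simp
  | succ N ih => rw [List.range_succ, Finset.sum_range_succ]; simp [ih]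

lemma list_sum_eq_sum_getD {g : List ℕ} : g.sum = ∑ j ∈ Finset.range g.length, g.getD j 0 := by
  induction g with
  | nil => simp
  | cons a g ih =>
    rw [List.sum_cons, List.length_cons, Finset.sum_range_succ']
    simp only [List.getD_cons_succ, List.getD_cons_zero]
    omega

lemma card_compSet (w : List ℕ) (hw : w.Nodup) (M : ℕ) :
    (compSet w M).card =
      if maj w ≤ M then (decSet w.length (M - maj w)).card else 0 := by
  by_cases hM : maj w ≤ M
  · rw [if_pos hM]
    apply Finset.card_bij'
      (i := fun g _ => (List.range w.length).map (fun j => g.getD j 0 - dst w j))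
      (j := fun h _ => (List.range w.length).map (fun j => h.getD j 0 + dst w j))
    · -- forward membership
      intro g hg
      rw [mem_compSet] at hg
      obtain ⟨hc, hsum⟩ := hg
      rw [compat_iff_nice hw] at hc
      obtain ⟨hlen, hnice⟩ := hc
      have hbd := nice_ge_dst hnice
      rw [mem_decSet]
      refine ⟨by simp, ?_, ?_⟩
      · rw [pairwise_iff_adj]
        intro i hi
        simp only [List.length_map, List.length_range] at hi
        have h1 : i + 1 < w.length := hi
        rw [show ∀ (hh : i < (List.range w.length |>.map _).length), ((List.range w.length).map (fun j => g.getD j 0 - dst w j))[i]'hh = g.getD i 0 - dst w i from fun hh => by simp,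
            show ∀ (hh : i+1 < (List.range w.length |>.map _).length), ((List.range w.length).map (fun j => g.getD j 0 - dst w j))[i+1]'hh = g.getD (i+1) 0 - dst w (i+1) from fun hh => by simp]
        have h2 := hnice i h1
        have h3 := dst_succ w i
        have h4 := hbd (i+1) h1
        split_ifs at h2 h3 <;> omega
      · rw [sum_map_range]
        have : ∑ j ∈ Finset.range w.length, (g.getD j 0 - dst w j)
            = (∑ j ∈ Finset.range w.length, g.getD j 0) - ∑ j ∈ Finset.range w.length, dst w j := by
          have h5 : ∑ j ∈ Finset.range w.length, (g.getD j 0 - dst w j) + ∑ j ∈ Finset.range w.length, dst w j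
              = ∑ j ∈ Finset.range w.length, g.getD j 0 := by
            rw [← Finset.sum_add_distrib]
            apply Finset.sum_congr rfl
            intro j hj
            have := hbd j (Finset.mem_range.1 hj)
            omega
          omega
        rw [this, sum_dst, ← hlen, ← list_sum_eq_sum_getD, hsum]
    · -- backward membership
      intro h hh
      rw [mem_decSet] at hh
      obtain ⟨hlen, hpw, hsum⟩ := hh
      rw [mem_compSet]
      have hadj : ∀ i, i + 1 < w.length → h.getD (i+1) 0 ≤ h.getD i 0 := by
        intro i hi
        rw [pairwise_iff_adj] at hpw
        have := hpw i (by omega)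
        rw [List.getD_eq_getElem h 0 (by omega), List.getD_eq_getElem h 0 (by omega)]
        exact this
      constructor
      · rw [compat_iff_nice hw]
        refine ⟨by simp, ?_⟩
        intro j hj
        rw [getD_map_range (by omega), getD_map_range (by omega : j < w.length)]
        have h1 := hadj j hj
        have h2 := dst_succ w j
        split_ifs at h2 ⊢ <;> omega
      · rw [sum_map_range, Finset.sum_add_distrib, sum_dst, ← hlen, ← list_sum_eq_sum_getD, hsum]
        omega
    · -- left inverse
      intro g hg
      rw [mem_compSet] at hg
      obtain ⟨hc, hsum⟩ := hg
      rw [compat_iff_nice hw] at hc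
      obtain ⟨hlen, hnice⟩ := hc
      have hbd := nice_ge_dst hnice
      apply List.ext_getElem (by simp [hlen])
      intro i h1 h2
      simp only [List.length_map, List.length_range] at h1
      have : i < w.length := h1
      simp only [List.getElem_map, List.getElem_range]
      rw [getD_map_range this, List.getD_eq_getElem g 0 (by omega)]
      have := hbd i this
      rw [List.getD_eq_getElem g 0 (by omega)] at this
      omega
    · -- right inverse
      intro h hh
      rw [mem_decSet] at hh
      obtain ⟨hlen, _, _⟩ := hh
      apply List.ext_getElem (by simp [hlen])
      intro i h1 h2
      simp only [List.length_map, List.length_range] at h1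
      simp only [List.getElem_map, List.getElem_range]
      rw [getD_map_range h1, List.getD_eq_getElem h 0 (by omega)]
      omega
  · rw [if_neg hM, Finset.card_eq_zero, Finset.eq_empty_iff_forall_notMem]
    intro g hg
    rw [mem_compSet] at hg
    obtain ⟨hc, hsum⟩ := hg
    rw [compat_iff_nice hw] at hc
    obtain ⟨hlen, hnice⟩ := hc
    have hbd := nice_ge_dst hnice
    have : ∑ j ∈ Finset.range w.length, dst w j ≤ ∑ j ∈ Finset.range w.length, g.getD j 0 :=
      Finset.sum_le_sum (fun j hj => hbd j (Finset.mem_range.1 hj))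
    rw [sum_dst] at this
    rw [list_sum_eq_sum_getD, hlen] at hsum
    omega

end StanleyAux2
section StanleyAux3

open List Finset PowerSeries

lemma length_le_sum {h : List ℕ} (hpos : ∀ x ∈ h, 1 ≤ x) : h.length ≤ h.sum := by
  induction h with
  | nil => simp
  | cons a t ih =>
    simp only [List.length_cons, List.sum_cons]
    have h1 := hpos a (by simp)
    have h2 := ih (fun x hx => hpos x (List.mem_cons_of_mem a hx))
    omega

lemma sum_map_sub_one {h : List ℕ} (hpos : ∀ x ∈ h, 1 ≤ x) :
    (h.map (· - 1)).sum = h.sum - h.length := by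
  induction h with
  | nil => simp
  | cons a t ih =>
    simp only [List.map_cons, List.sum_cons, List.length_cons]
    have h1 := hpos a (by simp)
    have h2 := ih (fun x hx => hpos x (List.mem_cons_of_mem a hx))
    have h3 := length_le_sum (fun x hx => hpos x (List.mem_cons_of_mem a hx))
    omega

lemma sum_map_add_one (h : List ℕ) : (h.map (· + 1)).sum = h.sum + h.length := by
  induction h with
  | nil => simp
  | cons a t ih => simp only [List.map_cons, List.sum_cons, List.length_cons]; omega

lemma getLast_eq_zero {h : List ℕ} (hpw : h.Pairwise (· ≥ ·)) (h0 : (0:ℕ) ∈ h) (hne : h ≠ []) :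
    h.getLast hne = 0 := by
  obtain ⟨k, hk, hk0⟩ := List.getElem_of_mem h0
  rw [List.getLast_eq_getElem]
  rcases Nat.lt_or_ge k (h.length - 1) with hlt | hge
  · rw [List.pairwise_iff_getElem] at hpw
    have := hpw k (h.length - 1) hk (by omega) hlt
    omega
  · have hk' : k = h.length - 1 := by omega
    subst hk'
    exact hk0

lemma card_decSet_succ (N M : ℕ) :
    (decSet (N+1) M).card
      = (decSet N M).card + (if N+1 ≤ M then (decSet (N+1) (M-(N+1))).card else 0) := by
  classical
  rw [← Finset.card_filter_add_card_filter_not (s := decSet (N+1) M)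
    (p := fun h => (0:ℕ) ∈ h)]
  congr 1
  · -- zero in h : drop last
    refine Finset.card_bij' (fun h _ => h.dropLast) (fun t _ => t ++ [0]) ?_ ?_ ?_ ?_
    · intro h hh
      rw [Finset.mem_filter, mem_decSet] at hh
      obtain ⟨⟨hlen, hpw, hsum⟩, h0⟩ := hh
      have hne : h ≠ [] := by intro hE; rw [hE] at hlen; simp at hlen
      have hlast := getLast_eq_zero hpw h0 hne
      rw [mem_decSet]
      refine ⟨by simp [hlen], hpw.sublist (List.dropLast_sublist h), ?_⟩
      have hdec := List.dropLast_append_getLast hne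
      have : h.sum = h.dropLast.sum + (h.getLast hne) := by
        conv_lhs => rw [← hdec]
        simp
      omega
    · intro t ht
      rw [mem_decSet] at ht
      obtain ⟨hlen, hpw, hsum⟩ := ht
      rw [Finset.mem_filter, mem_decSet]
      refine ⟨⟨by simp [hlen], ?_, by simp [hsum]⟩, by simp⟩
      rw [List.pairwise_append]
      exact ⟨hpw, by simp, by intro x hx y hy; simp at hy; omega⟩
    · intro h hh
      rw [Finset.mem_filter, mem_decSet] at hh
      obtain ⟨⟨hlen, hpw, hsum⟩, h0⟩ := hh
      have hne : h ≠ [] := by intro hE; rw [hE] at hlen; simp at hlen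
      have hlast := getLast_eq_zero hpw h0 hne
      conv_rhs => rw [← List.dropLast_append_getLast hne]
      rw [hlast]
    · intro t _; exact List.dropLast_concat
  · -- no zero : subtract 1 from all
    by_cases hNM : N+1 ≤ M
    · rw [if_pos hNM]
      refine Finset.card_bij' (fun h _ => h.map (· - 1)) (fun t _ => t.map (· + 1)) ?_ ?_ ?_ ?_
      · intro h hh
        rw [Finset.mem_filter, mem_decSet] at hh
        obtain ⟨⟨hlen, hpw, hsum⟩, h0⟩ := hh
        have hpos : ∀ x ∈ h, 1 ≤ x := by
          intro x hx; rcases Nat.eq_zero_or_pos x with rfl | h1; · exact absurd hx h0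
          · omega
        rw [mem_decSet]
        refine ⟨by simp [hlen], ?_, ?_⟩
        · exact hpw.map _ (fun a b hab => by omega)
        · rw [sum_map_sub_one hpos]; omega
      · intro t ht
        rw [mem_decSet] at ht
        obtain ⟨hlen, hpw, hsum⟩ := ht
        rw [Finset.mem_filter, mem_decSet]
        refine ⟨⟨by simp [hlen], hpw.map _ (fun a b hab => by omega), ?_⟩, ?_⟩
        · rw [sum_map_add_one]; omega
        · simp
      · intro h hh
        rw [Finset.mem_filter, mem_decSet] at hh
        obtain ⟨⟨hlen, hpw, hsum⟩, h0⟩ := hh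
        rw [List.map_map]
        have : ∀ x ∈ h, (x - 1) + 1 = x := by
          intro x hx; rcases Nat.eq_zero_or_pos x with rfl | h1; · exact absurd hx h0
          · omega
        rw [show ((fun x => x + 1) ∘ fun x => x - 1) = fun x => (x - 1) + 1 from rfl]
        rw [List.map_congr_left this]
        exact List.map_id h
      · intro t _
        rw [List.map_map]
        rw [show ((fun x => x - 1) ∘ fun x => x + 1) = fun x => x from by funext x; simp]
        exact List.map_id t
    · rw [if_neg hNM]
      rw [Finset.card_eq_zero, Finset.filter_eq_empty_iff]
      intro h hh hno
      rw [mem_decSet] at hh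
      obtain ⟨hlen, hpw, hsum⟩ := hh
      have hpos : ∀ x ∈ h, 1 ≤ x := by
        intro x hx; rcases Nat.eq_zero_or_pos x with rfl | h1; · exact absurd hx hno
        · omega
      have := length_le_sum hpos
      omega

lemma card_decSet_zero (M : ℕ) : (decSet 0 M).card = if M = 0 then 1 else 0 := by
  split_ifs with h
  · subst h
    rw [show decSet 0 0 = {[]} from ?_, Finset.card_singleton]
    ext l
    rw [mem_decSet]
    constructor
    · rintro ⟨h1, _, _⟩; simpa [List.length_eq_zero_iff] using h1
    · rintro h; simp at h; subst h; simp
  · rw [Finset.card_eq_zero, Finset.eq_empty_iff_forall_notMem]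
    intro l hl
    rw [mem_decSet] at hl
    obtain ⟨h1, _, h3⟩ := hl
    rw [List.length_eq_zero_iff] at h1
    subst h1
    simp at h3
    omega

noncomputable def Dser (N : ℕ) : PowerSeries ℚ := PowerSeries.mk fun M => ((decSet N M).card : ℚ)

lemma Dser_zero : Dser 0 = 1 := by
  ext M
  rw [Dser, PowerSeries.coeff_mk, PowerSeries.coeff_one, card_decSet_zero]
  split_ifs <;> simp

lemma Dser_rec (N : ℕ) : (1 - PowerSeries.X ^ (N+1)) * Dser (N+1) = Dser N := by
  ext M
  rw [sub_mul, one_mul, map_sub, PowerSeries.coeff_X_pow_mul']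
  simp only [Dser, PowerSeries.coeff_mk]
  split_ifs with h
  · rw [card_decSet_succ N M, if_pos h]; push_cast; ring
  · rw [card_decSet_succ N M, if_neg h]; push_cast; ring

noncomputable def Eser (N : ℕ) : PowerSeries ℚ := ∏ i ∈ Finset.range N, (1 - PowerSeries.X ^ (i+1))

lemma Eser_mul_Dser (N : ℕ) : Eser N * Dser N = 1 := by
  induction N with
  | zero => simp [Eser, Dser_zero]
  | succ N ih =>
    rw [Eser, Finset.prod_range_succ, ← Eser, mul_assoc, Dser_rec, ih]

noncomputable def Fser (w : List ℕ) : PowerSeries ℚ := PowerSeries.mk fun M => ((compSet w M).card : ℚ)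

lemma Fser_eq (w : List ℕ) (hw : w.Nodup) :
    Fser w = (PowerSeries.X : PowerSeries ℚ) ^ (maj w) * Dser w.length := by
  ext M
  rw [Fser, PowerSeries.coeff_mk, PowerSeries.coeff_X_pow_mul', card_compSet w hw M]
  simp only [Dser, PowerSeries.coeff_mk]
  split_ifs <;> simp

end StanleyAux3
section StanleyAux4

open List Finset

lemma zip_unzip_eq {l : List (ℕ × ℕ)} : (l.map Prod.fst).zip (l.map Prod.snd) = l := by
  rw [List.zip_map']
  simp

lemma sorted_KLE_KR {l : List (ℕ × ℕ)} (hs : l.Pairwise KLE) (hn : (l.map Prod.fst).Nodup) :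
    l.Pairwise KR := by
  have h2 : l.Pairwise (fun p q => p.1 ≠ q.1) := List.pairwise_map.mp hn
  refine (hs.and h2).imp ?_
  rintro ⟨a1, a2⟩ ⟨b1, b2⟩ ⟨h1, hne⟩
  unfold KLE at h1
  unfold KR
  simp only at *
  omega

lemma eq_of_perm_KR {l₁ l₂ : List (ℕ × ℕ)} (p : l₁.Perm l₂) (s₁ : l₁.Pairwise KR)
    (s₂ : l₂.Pairwise KR) : l₁ = l₂ :=
  List.Perm.eq_of_pairwise (fun a b _ _ h1 h2 => antisymm h1 h2) s₁ s₂ p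

lemma mem_shuffles {π σ τ : List ℕ} : τ ∈ shuffles π σ ↔ τ.Perm (π ++ σ) ∧ IsShuffle π σ τ := by
  classical
  unfold shuffles
  rw [Finset.mem_filter, List.mem_toFinset, List.mem_permutations]

lemma nodup_pi_sigma {π σ : List ℕ} (hπ : IsPerm π) (hσ : IsPerm σ) (hd : π.Disjoint σ) :
    (π ++ σ).Nodup := List.nodup_append'.mpr ⟨hπ.1, hσ.1, hd⟩

/-- the first components of a merged pair list. -/
lemma filter_mem_pi {π σ : List ℕ} (hd : π.Disjoint σ) {τ : List ℕ} (hsub : π <+ τ) (hperm : τ.Perm (π ++ σ)) :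
    τ.filter (fun x => decide (x ∈ π)) = π := by
  have h1 : π.filter (fun x => decide (x ∈ π)) = π :=
    List.filter_eq_self.mpr (by intro a ha; simpa using ha)
  have h2 : π.Sublist (τ.filter (fun x => decide (x ∈ π))) := by
    conv_lhs => rw [← h1]
    exact hsub.filter _
  refine (h2.eq_of_length ?_).symm
  have h3 := (hperm.filter (fun x => decide (x ∈ π))).length_eq
  rw [List.filter_append, h1] at h3
  have h4 : σ.filter (fun x => decide (x ∈ π)) = [] := by
    rw [List.filter_eq_nil_iff]
    intro a ha
    simpa using fun hmem => hd hmem ha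
  rw [h4] at h3
  simpa using h3.symm

lemma filter_mem_sigma {π σ : List ℕ} (hd : π.Disjoint σ) {τ : List ℕ} (hsub : σ <+ τ) (hperm : τ.Perm (π ++ σ)) :
    τ.filter (fun x => decide (x ∈ σ)) = σ := by
  have h1 : σ.filter (fun x => decide (x ∈ σ)) = σ :=
    List.filter_eq_self.mpr (by intro a ha; simpa using ha)
  have h2 : σ.Sublist (τ.filter (fun x => decide (x ∈ σ))) := by
    conv_lhs => rw [← h1]
    exact hsub.filter _
  refine (h2.eq_of_length ?_).symm
  have h3 := (hperm.filter (fun x => decide (x ∈ σ))).length_eq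
  rw [List.filter_append, h1] at h3
  have h4 : π.filter (fun x => decide (x ∈ σ)) = [] := by
    rw [List.filter_eq_nil_iff]
    intro a ha
    simpa using fun hmem => hd ha hmem
  rw [h4] at h3
  simpa using h3.symm

lemma map_fst_filter_zip {τ g : List ℕ} (hlen : g.length = τ.length) (q : ℕ → Bool) :
    ((τ.zip g).filter (fun p => q p.1)).map Prod.fst = τ.filter q := by
  have h1 : τ = (τ.zip g).map Prod.fst := (List.map_fst_zip (l₁ := τ) (l₂ := g) (by omega)).symm
  conv_rhs => rw [h1]
  rw [List.filter_map]
  rfl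

/-- splitting: the π-part of a compatible labelling of a shuffle. -/
lemma split_pi {π σ : List ℕ} (hd : π.Disjoint σ) {τ g : List ℕ} (hperm : τ.Perm (π ++ σ)) (hsub : π <+ τ) (hg : Compat τ g) :
    π.zip (((τ.zip g).filter (fun p => decide (p.1 ∈ π))).map Prod.snd)
      = (τ.zip g).filter (fun p => decide (p.1 ∈ π)) ∧
    Compat π (((τ.zip g).filter (fun p => decide (p.1 ∈ π))).map Prod.snd) := by
  set zf := (τ.zip g).filter (fun p => decide (p.1 ∈ π)) with hzf
  have hfst : zf.map Prod.fst = π := by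
    rw [hzf, map_fst_filter_zip hg.1 (fun x => decide (x ∈ π)), filter_mem_pi hd hsub hperm]
  have hkr : zf.Pairwise KR := hg.2.filter _
  have hzip : π.zip (zf.map Prod.snd) = zf := by
    conv_lhs => rw [← hfst]
    exact zip_unzip_eq
  refine ⟨hzip, ?_, ?_⟩
  · have := congrArg List.length hfst
    simpa using this
  · rw [hzip]; exact hkr

lemma split_sigma {π σ : List ℕ} (hd : π.Disjoint σ) {τ g : List ℕ} (hperm : τ.Perm (π ++ σ)) (hsub : σ <+ τ) (hg : Compat τ g) :
    σ.zip (((τ.zip g).filter (fun p => decide (p.1 ∈ σ))).map Prod.snd)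
      = (τ.zip g).filter (fun p => decide (p.1 ∈ σ)) ∧
    Compat σ (((τ.zip g).filter (fun p => decide (p.1 ∈ σ))).map Prod.snd) := by
  set zs := (τ.zip g).filter (fun p => decide (p.1 ∈ σ)) with hzs
  have hfst : zs.map Prod.fst = σ := by
    rw [hzs, map_fst_filter_zip hg.1 (fun x => decide (x ∈ σ)), filter_mem_sigma hd hsub hperm]
  have hkr : zs.Pairwise KR := hg.2.filter _
  have hzip : σ.zip (zs.map Prod.snd) = zs := by
    conv_lhs => rw [← hfst]
    exact zip_unzip_eq
  refine ⟨hzip, ?_, ?_⟩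
  · have := congrArg List.length hfst
    simpa using this
  · rw [hzip]; exact hkr

lemma filter_sigma_eq_not_pi {π σ : List ℕ} (hd : π.Disjoint σ) {τ g : List ℕ} (hperm : τ.Perm (π ++ σ)) (hlen : g.length = τ.length) :
    (τ.zip g).filter (fun p => decide (p.1 ∈ σ))
      = (τ.zip g).filter (fun p => !decide (p.1 ∈ π)) := by
  apply List.filter_congr
  intro p hp
  have hfst : p.1 ∈ τ := by
    obtain ⟨a, b⟩ := p
    exact (List.of_mem_zip hp).1
  have : p.1 ∈ π ++ σ := hperm.subset hfst
  rw [List.mem_append] at this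
  rcases this with h | h
  · have : p.1 ∉ σ := fun hs => hd h hs
    simp [h, this]
  · have : p.1 ∉ π := fun hs => hd hs h
    simp [h, this]

lemma split_sum {π σ : List ℕ} (hd : π.Disjoint σ) {τ g : List ℕ} (hperm : τ.Perm (π ++ σ)) (hg : Compat τ g) :
    (((τ.zip g).filter (fun p => decide (p.1 ∈ π))).map Prod.snd).sum
      + (((τ.zip g).filter (fun p => decide (p.1 ∈ σ))).map Prod.snd).sum = g.sum := by
  rw [filter_sigma_eq_not_pi hd hperm hg.1]
  have hp := List.filter_append_perm (fun p => decide (p.1 ∈ π)) (τ.zip g)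
  have h2 := (hp.map Prod.snd).sum_eq
  rw [List.map_append, List.sum_append] at h2
  rw [h2, List.map_snd_zip (l₁ := τ) (l₂ := g) (le_of_eq hg.1)]

/-- merging: all the properties of the sorted merge. -/
lemma merge_props {π σ : List ℕ} (hπ : IsPerm π) (hσ : IsPerm σ) (hd : π.Disjoint σ) {f h : List ℕ} (hf : Compat π f) (hh : Compat σ h) :
    ((List.insertionSort KLE (π.zip f ++ σ.zip h)).map Prod.fst) ∈ shuffles π σ ∧
    Compat ((List.insertionSort KLE (π.zip f ++ σ.zip h)).map Prod.fst)
      ((List.insertionSort KLE (π.zip f ++ σ.zip h)).map Prod.snd) ∧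
    (List.insertionSort KLE (π.zip f ++ σ.zip h)).filter (fun p => decide (p.1 ∈ π)) = π.zip f ∧
    (List.insertionSort KLE (π.zip f ++ σ.zip h)).filter (fun p => decide (p.1 ∈ σ)) = σ.zip h ∧
    ((List.insertionSort KLE (π.zip f ++ σ.zip h)).map Prod.snd).sum = f.sum + h.sum := by
  set s := List.insertionSort KLE (π.zip f ++ σ.zip h) with hs
  have hsp : s.Perm (π.zip f ++ σ.zip h) := List.perm_insertionSort _ _
  have hmfst : (π.zip f ++ σ.zip h).map Prod.fst = π ++ σ := by
    rw [List.map_append, List.map_fst_zip (l₁ := π) (l₂ := f) (le_of_eq hf.1.symm),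
      List.map_fst_zip (l₁ := σ) (l₂ := h) (le_of_eq hh.1.symm)]
  have hfstperm : (s.map Prod.fst).Perm (π ++ σ) := by
    have := hsp.map Prod.fst
    rwa [hmfst] at this
  have hnd : (s.map Prod.fst).Nodup := (nodup_pi_sigma hπ hσ hd).perm hfstperm.symm
  have hkr : s.Pairwise KR :=
    sorted_KLE_KR (List.pairwise_insertionSort KLE (π.zip f ++ σ.zip h)) hnd
  have hfilπ : s.filter (fun p => decide (p.1 ∈ π)) = π.zip f := by
    have h1 : (π.zip f).filter (fun p => decide (p.1 ∈ π)) = π.zip f := by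
      rw [List.filter_eq_self]
      intro a ha
      obtain ⟨a1, a2⟩ := a
      simpa using (List.of_mem_zip ha).1
    have h2 : (σ.zip h).filter (fun p => decide (p.1 ∈ π)) = [] := by
      rw [List.filter_eq_nil_iff]
      intro a ha
      obtain ⟨a1, a2⟩ := a
      have := (List.of_mem_zip ha).1
      simpa using fun hmem => hd hmem this
    have hp : (s.filter (fun p => decide (p.1 ∈ π))).Perm (π.zip f) := by
      have := hsp.filter (fun p => decide (p.1 ∈ π))
      rwa [List.filter_append, h1, h2, List.append_nil] at this
    exact eq_of_perm_KR hp (hkr.filter _) hf.2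
  have hfilσ : s.filter (fun p => decide (p.1 ∈ σ)) = σ.zip h := by
    have h1 : (σ.zip h).filter (fun p => decide (p.1 ∈ σ)) = σ.zip h := by
      rw [List.filter_eq_self]
      intro a ha
      obtain ⟨a1, a2⟩ := a
      simpa using (List.of_mem_zip ha).1
    have h2 : (π.zip f).filter (fun p => decide (p.1 ∈ σ)) = [] := by
      rw [List.filter_eq_nil_iff]
      intro a ha
      obtain ⟨a1, a2⟩ := a
      have := (List.of_mem_zip ha).1
      simpa using fun hmem => hd this hmem
    have hp : (s.filter (fun p => decide (p.1 ∈ σ))).Perm (σ.zip h) := by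
      have := hsp.filter (fun p => decide (p.1 ∈ σ))
      rwa [List.filter_append, h1, h2, List.nil_append] at this
    exact eq_of_perm_KR hp (hkr.filter _) hh.2
  have hsubπ : π <+ s.map Prod.fst := by
    have h1 : (π.zip f).Sublist s := by
      rw [← hfilπ]; exact List.filter_sublist (l := s)
    have := h1.map Prod.fst
    rwa [List.map_fst_zip (l₁ := π) (l₂ := f) (le_of_eq hf.1.symm)] at this
  have hsubσ : σ <+ s.map Prod.fst := by
    have h1 : (σ.zip h).Sublist s := by
      rw [← hfilσ]; exact List.filter_sublist (l := s)
    have := h1.map Prod.fst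
    rwa [List.map_fst_zip (l₁ := σ) (l₂ := h) (le_of_eq hh.1.symm)] at this
  refine ⟨?_, ⟨by simp, ?_⟩, hfilπ, hfilσ, ?_⟩
  · rw [mem_shuffles]
    refine ⟨hfstperm, ?_, ⟨hnd, ?_⟩, hsubπ, hsubσ⟩
    · rw [hfstperm.length_eq]
      simp
    · intro x hx
      have := hfstperm.subset hx
      rw [List.mem_append] at this
      rcases this with h1 | h1
      · exact hπ.2 x h1
      · exact hσ.2 x h1
  · rw [zip_unzip_eq]
    exact hkr
  · have := (hsp.map Prod.snd).sum_eq
    rw [List.map_append, List.sum_append, List.map_snd_zip (l₁ := π) (l₂ := f) (le_of_eq hf.1),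
      List.map_snd_zip (l₁ := σ) (l₂ := h) (le_of_eq hh.1)] at this
    exact this

/-- the key combinatorial identity, coefficientwise. -/
lemma coeff_identity {π σ : List ℕ} (hπ : IsPerm π) (hσ : IsPerm σ) (hd : π.Disjoint σ) (M : ℕ) :
    ∑ τ ∈ shuffles π σ, (compSet τ M).card
      = ∑ p ∈ Finset.HasAntidiagonal.antidiagonal M, (compSet π p.1).card * (compSet σ p.2).card := by
  classical
  have hL : ∑ τ ∈ shuffles π σ, (compSet τ M).card
      = ((shuffles π σ).sigma (fun τ => compSet τ M)).card := (Finset.card_sigma _ _).symm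
  have hR : ∑ p ∈ Finset.HasAntidiagonal.antidiagonal M, (compSet π p.1).card * (compSet σ p.2).card
      = ((Finset.HasAntidiagonal.antidiagonal M).sigma (fun p => compSet π p.1 ×ˢ compSet σ p.2)).card := by
    rw [Finset.card_sigma]
    exact Finset.sum_congr rfl fun p _ => (Finset.card_product _ _).symm
  rw [hL, hR]
  refine Finset.card_bij'
    (fun x _ => ⟨(((((x.1.zip x.2).filter (fun p => decide (p.1 ∈ π))).map Prod.snd)).sum,
                  ((((x.1.zip x.2).filter (fun p => decide (p.1 ∈ σ))).map Prod.snd)).sum),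
                 (((x.1.zip x.2).filter (fun p => decide (p.1 ∈ π))).map Prod.snd,
                  ((x.1.zip x.2).filter (fun p => decide (p.1 ∈ σ))).map Prod.snd)⟩)
    (fun y _ => ⟨(List.insertionSort KLE (π.zip y.2.1 ++ σ.zip y.2.2)).map Prod.fst,
                 (List.insertionSort KLE (π.zip y.2.1 ++ σ.zip y.2.2)).map Prod.snd⟩)
    ?_ ?_ ?_ ?_
  · rintro ⟨τ, g⟩ hx
    rw [Finset.mem_sigma] at hx
    obtain ⟨hτ, hg⟩ := hx
    dsimp only at hτ hg
    rw [mem_shuffles] at hτ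
    obtain ⟨hperm, hlen', _, hsubπ, hsubσ⟩ := hτ
    rw [mem_compSet] at hg
    obtain ⟨hcg, hsum⟩ := hg
    rw [Finset.mem_sigma, Finset.HasAntidiagonal.mem_antidiagonal, Finset.mem_product]
    obtain ⟨-, hcπ⟩ := split_pi hd hperm hsubπ hcg
    obtain ⟨-, hcσ⟩ := split_sigma hd hperm hsubσ hcg
    refine ⟨?_, ?_, ?_⟩
    · dsimp only
      rw [split_sum hd hperm hcg, hsum]
    · dsimp only
      rw [mem_compSet]
      exact ⟨hcπ, rfl⟩
    · dsimp only
      rw [mem_compSet]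
      exact ⟨hcσ, rfl⟩
  · rintro ⟨⟨a, b⟩, f, h⟩ hy
    rw [Finset.mem_sigma, Finset.HasAntidiagonal.mem_antidiagonal, Finset.mem_product] at hy
    obtain ⟨hab, hf, hh⟩ := hy
    rw [mem_compSet] at hf hh
    obtain ⟨hmem, hcomp, -, -, hsum⟩ := merge_props hπ hσ hd hf.1 hh.1
    rw [Finset.mem_sigma]
    refine ⟨hmem, ?_⟩
    rw [mem_compSet]
    exact ⟨hcomp, by rw [hsum, hf.2, hh.2, hab]⟩
  · rintro ⟨τ, g⟩ hx
    rw [Finset.mem_sigma] at hx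
    obtain ⟨hτ, hg⟩ := hx
    dsimp only at hτ hg
    rw [mem_shuffles] at hτ
    obtain ⟨hperm, hlen', hperm', hsubπ, hsubσ⟩ := hτ
    rw [mem_compSet] at hg
    obtain ⟨hcg, hsum⟩ := hg
    obtain ⟨hzipπ, hcπ⟩ := split_pi hd hperm hsubπ hcg
    obtain ⟨hzipσ, hcσ⟩ := split_sigma hd hperm hsubσ hcg
    dsimp only
    have hseq : List.insertionSort KLE
        (π.zip (((τ.zip g).filter (fun p => decide (p.1 ∈ π))).map Prod.snd)
          ++ σ.zip (((τ.zip g).filter (fun p => decide (p.1 ∈ σ))).map Prod.snd)) = τ.zip g := by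
      rw [hzipπ, hzipσ]
      have hp1 : ((τ.zip g).filter (fun p => decide (p.1 ∈ π))
          ++ (τ.zip g).filter (fun p => decide (p.1 ∈ σ))).Perm (τ.zip g) := by
        rw [filter_sigma_eq_not_pi hd hperm hcg.1]
        exact List.filter_append_perm _ _
      have hsortp : (List.insertionSort KLE ((τ.zip g).filter (fun p => decide (p.1 ∈ π))
          ++ (τ.zip g).filter (fun p => decide (p.1 ∈ σ)))).Perm (τ.zip g) :=
        (List.perm_insertionSort _ _).trans hp1
      refine eq_of_perm_KR hsortp ?_ hcg.2
      have hnd : ((List.insertionSort KLE ((τ.zip g).filter (fun p => decide (p.1 ∈ π))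
          ++ (τ.zip g).filter (fun p => decide (p.1 ∈ σ)))).map Prod.fst).Nodup := by
        have h1 : ((τ.zip g).map Prod.fst).Nodup := by
          rw [List.map_fst_zip (l₁ := τ) (l₂ := g) (le_of_eq hcg.1.symm)]
          exact hperm'.1
        exact ((hsortp.map Prod.fst).symm.nodup h1)
      exact sorted_KLE_KR (List.pairwise_insertionSort _ _) hnd
    rw [hseq]
    have h1 : (τ.zip g).map Prod.fst = τ := List.map_fst_zip (l₁ := τ) (l₂ := g) (le_of_eq hcg.1.symm)
    have h2 : (τ.zip g).map Prod.snd = g := List.map_snd_zip (l₁ := τ) (l₂ := g) (le_of_eq hcg.1)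
    rw [h1, h2]
  · rintro ⟨⟨a, b⟩, f, h⟩ hy
    rw [Finset.mem_sigma, Finset.HasAntidiagonal.mem_antidiagonal, Finset.mem_product] at hy
    obtain ⟨hab, hf, hh⟩ := hy
    rw [mem_compSet] at hf hh
    obtain ⟨hmem, hcomp, hfilπ, hfilσ, hsum⟩ := merge_props hπ hσ hd hf.1 hh.1
    dsimp only
    rw [zip_unzip_eq, hfilπ, hfilσ,
      List.map_snd_zip (l₁ := π) (l₂ := f) (le_of_eq hf.1.1), List.map_snd_zip (l₁ := σ) (l₂ := h) (le_of_eq hh.1.1)]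
    rw [hf.2, hh.2]

end StanleyAux4
section StanleyAux5

open List Finset PowerSeries

lemma sum_Fser {π σ : List ℕ} (hπ : IsPerm π) (hσ : IsPerm σ) (hd : π.Disjoint σ) :
    ∑ τ ∈ shuffles π σ, Fser τ = Fser π * Fser σ := by
  apply PowerSeries.ext
  intro M
  rw [map_sum, PowerSeries.coeff_mul]
  simp only [Fser, coeff_mk]
  have := coeff_identity hπ hσ hd M
  exact_mod_cast this

lemma shuffle_mem_facts {π σ τ : List ℕ} (hτ : τ ∈ shuffles π σ) :
    τ.Nodup ∧ τ.length = π.length + σ.length := by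
  rw [mem_shuffles] at hτ
  exact ⟨hτ.2.2.1.1, hτ.2.1⟩

lemma key_powerseries {π σ : List ℕ} (hπ : IsPerm π) (hσ : IsPerm σ) (hd : π.Disjoint σ) :
    (∑ τ ∈ shuffles π σ, (PowerSeries.X : PowerSeries ℚ) ^ maj τ)
        * Eser π.length * Eser σ.length
      = (PowerSeries.X : PowerSeries ℚ) ^ (maj π + maj σ)
        * Eser (π.length + σ.length) := by
  have h1 := sum_Fser hπ hσ hd
  have h2 : ∀ τ ∈ shuffles π σ,
      Fser τ = (PowerSeries.X : PowerSeries ℚ) ^ maj τ * Dser (π.length + σ.length) := by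
    intro τ hτ
    obtain ⟨hnd, hlen⟩ := shuffle_mem_facts hτ
    rw [Fser_eq τ hnd, hlen]
  rw [Finset.sum_congr rfl h2, ← Finset.sum_mul, Fser_eq π hπ.1, Fser_eq σ hσ.1] at h1
  set S := ∑ τ ∈ shuffles π σ, (PowerSeries.X : PowerSeries ℚ) ^ maj τ with hS
  have hm := Eser_mul_Dser π.length
  have hn := Eser_mul_Dser σ.length
  have hN := Eser_mul_Dser (π.length + σ.length)
  rw [pow_add]
  linear_combination (Eser π.length * Eser σ.length * Eser (π.length + σ.length)) * h1
    - (S * Eser π.length * Eser σ.length) * hN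
    + (PowerSeries.X ^ maj π * PowerSeries.X ^ maj σ * Eser (π.length + σ.length)
        * Dser σ.length * Eser σ.length) * hm
    + (PowerSeries.X ^ maj π * PowerSeries.X ^ maj σ * Eser (π.length + σ.length)) * hn

/-- polynomial versions -/
noncomputable def Epoly (k : ℕ) : Polynomial ℚ := ∏ i ∈ Finset.range k, (1 - Polynomial.X ^ (i+1))

lemma key_polynomial {π σ : List ℕ} (hπ : IsPerm π) (hσ : IsPerm σ) (hd : π.Disjoint σ) :
    (∑ τ ∈ shuffles π σ, (Polynomial.X : Polynomial ℚ) ^ maj τ)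
        * Epoly π.length * Epoly σ.length
      = (Polynomial.X : Polynomial ℚ) ^ (maj π + maj σ)
        * Epoly (π.length + σ.length) := by
  have hkey := key_powerseries hπ hσ hd
  set φ := (Polynomial.coeToPowerSeries.ringHom : Polynomial ℚ →+* PowerSeries ℚ) with hφ
  have hinj : Function.Injective φ := by
    intro p q hpq
    rw [hφ, Polynomial.coeToPowerSeries.ringHom_apply, Polynomial.coeToPowerSeries.ringHom_apply]
      at hpq
    exact Polynomial.coe_inj.mp hpq
  apply hinj
  have hX : φ Polynomial.X = PowerSeries.X := by
    rw [hφ, Polynomial.coeToPowerSeries.ringHom_apply, Polynomial.coe_X]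
  have hE : ∀ k, φ (Epoly k) = Eser k := by
    intro k
    rw [Epoly, Eser, map_prod]
    apply Finset.prod_congr rfl
    intro i _
    rw [map_sub, map_one, map_pow, hX]
  rw [map_mul, map_mul, map_mul, map_sum, map_pow, hX, hE, hE, hE]
  have : ∀ τ ∈ shuffles π σ, φ (Polynomial.X ^ maj τ) = PowerSeries.X ^ maj τ := by
    intro τ _
    rw [map_pow, hX]
  rw [Finset.sum_congr rfl this]
  exact hkey

section ratfunc

noncomputable abbrev qX : RatFunc ℚ := RatFunc.X

noncomputable def A : Polynomial ℚ →+* RatFunc ℚ := algebraMap (Polynomial ℚ) (RatFunc ℚ)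

lemma one_sub_X_pow_ne (k : ℕ) : (1 : RatFunc ℚ) - qX ^ (k+1) ≠ 0 := by
  have h1 : ((1 : Polynomial ℚ) - Polynomial.X ^ (k+1)) ≠ 0 := by
    intro h
    have := congrArg (fun p => Polynomial.coeff p (k+1)) h
    simp [Polynomial.coeff_one] at this
  have := RatFunc.algebraMap_ne_zero h1
  rwa [map_sub, map_one, map_pow, RatFunc.algebraMap_X] at this

lemma geom_mul (k : ℕ) :
    (∑ i ∈ Finset.range (k+1), qX ^ i) * (1 - qX) = 1 - qX ^ (k+1) := by
  have := geom_sum_mul qX (k+1)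
  linear_combination -this

lemma qFact_mul_pow (k : ℕ) :
    qFact qX k * (1 - qX) ^ k = ∏ i ∈ Finset.range k, (1 - qX ^ (i+1)) := by
  rw [qFact, show ((1 : RatFunc ℚ) - qX) ^ k = ∏ _i ∈ Finset.range k, (1 - qX) from by
      rw [Finset.prod_const, Finset.card_range],
    ← Finset.prod_mul_distrib]
  exact Finset.prod_congr rfl fun i _ => geom_mul i

lemma A_Epoly (k : ℕ) : A (Epoly k) = qFact qX k * (1 - qX) ^ k := by
  rw [Epoly, map_prod, qFact_mul_pow]
  apply Finset.prod_congr rfl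
  intro i _
  rw [map_sub, map_one, map_pow, A, RatFunc.algebraMap_X]

lemma qFact_ne_zero (k : ℕ) : qFact qX k ≠ 0 := by
  rw [qFact]
  apply Finset.prod_ne_zero_iff.mpr
  intro i _
  intro h
  have := geom_mul i
  rw [h, zero_mul] at this
  exact one_sub_X_pow_ne i this.symm

lemma one_sub_X_ne : (1 : RatFunc ℚ) - qX ≠ 0 := by
  have := one_sub_X_pow_ne 0
  simpa using this

end ratfunc

end StanleyAux5

/-- `∑_{τ ∈ S(π,σ)} q^{maj τ} = q^{maj π + maj σ} · [m+n choose m]_q`. -/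
theorem sum_q_maj_shuffles (π σ : List ℕ) (hπ : IsPerm π) (hσ : IsPerm σ)
    (hd : π.Disjoint σ) :
    ∑ τ ∈ shuffles π σ, (RatFunc.X : RatFunc ℚ) ^ maj τ =
      (RatFunc.X : RatFunc ℚ) ^ (maj π + maj σ) *
        qBinom RatFunc.X (π.length + σ.length) π.length := by
  have hkey := key_polynomial hπ hσ hd
  have hA := congrArg A hkey
  rw [map_mul, map_mul, map_mul, map_sum, map_pow, A_Epoly, A_Epoly, A_Epoly] at hA
  have hAX : A Polynomial.X = qX := by rw [A, RatFunc.algebraMap_X]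
  rw [hAX] at hA
  have hterm : ∀ τ ∈ shuffles π σ, A (Polynomial.X ^ maj τ) = qX ^ maj τ := by
    intro τ _
    rw [map_pow, hAX]
  rw [Finset.sum_congr rfl hterm] at hA
  set m := π.length
  set n := σ.length
  set S := ∑ τ ∈ shuffles π σ, (qX : RatFunc ℚ) ^ maj τ with hSdef
  have hc : (S * (qFact qX m * qFact qX n)) * (1 - qX) ^ (m + n)
      = ((qX : RatFunc ℚ) ^ (maj π + maj σ) * qFact qX (m+n)) * (1 - qX) ^ (m + n) := by
    linear_combination hA
  have hcancel := mul_right_cancel₀ (pow_ne_zero (m+n) one_sub_X_ne) hc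
  show S = (qX : RatFunc ℚ) ^ (maj π + maj σ) * qBinom qX (m + n) m
  rw [qBinom, show m + n - m = n from by omega]
  have hne := mul_ne_zero (qFact_ne_zero m) (qFact_ne_zero n)
  rw [mul_div_assoc', eq_div_iff hne]
  linear_combination hcancel
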